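/- Let C_B be an invertible n×n matrix over ℚ, m ∈ ℚ^n a row vector, φ_B = −C_B^{−T}·C_B, and ⟨x, y⟩ = x·C_B^{−T}·yᵀ. Let φ_A be the (n+1)×(n+1) block matrix [[⟨m, m⟩ − 1, −m·φ_B], [−C_B^{−T}·mᵀ, φ_B]]. Write the characteristic polynomials χ_A(x) = det(x·I_{n+1} − φ_A) = Σ_{i=0}^{n+1} λ_i^A x^i and χ_B(x) = det(x·I_n − φ_B) = Σ_{i=0}^{n} λ_i^B x^i, with the convention λ_j^B = 0 for j > n. Then for every integer ℓ with 0 ≤ ℓ ≤ n: λ_{n+1−ℓ}^A = λ_{n−ℓ}^B − (⟨m, m⟩ − 1)·λ_{n−(ℓ−1)}^B − Σ_{i=1}^{ℓ−1} λ_{n−ℓ+i+1}^B · ⟨m·φ_B^i, m⟩. -/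

import Mathlib

open Matrix Finset Polynomial


lemma charmatrix_mul_Q {n : ℕ} (M : Matrix (Fin n) (Fin n) ℚ) :
    charmatrix M * (∑ j ∈ Finset.range n,
      (∑ k ∈ Finset.Icc (j+1) n, Polynomial.C (M.charpoly.coeff k) * Polynomial.X ^ (k-j-1)) •
        (M ^ j).map Polynomial.C) = M.charpoly • 1 := by
  set b : ℕ → ℚ := fun k => M.charpoly.coeff k with hb
  set s : ℕ → ℚ[X] := fun j => ∑ k ∈ Finset.Icc j n, Polynomial.C (b k) * Polynomial.X ^ (k-j)
    with hs
  set A : ℕ → Matrix (Fin n) (Fin n) ℚ[X] := fun j => (M ^ j).map Polynomial.C with hA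
  have hdeg : M.charpoly.natDegree = n := by
    rw [Matrix.charpoly_natDegree_eq_dim, Fintype.card_fin]
  -- Cayley-Hamilton, mapped by C
  have hCH : ∑ j ∈ Finset.range (n+1), Polynomial.C (b j) • A j = 0 := by
    have h0 : ∑ j ∈ Finset.range (n+1), b j • M ^ j = 0 := by
      have := M.aeval_self_charpoly
      rwa [aeval_eq_sum_range, hdeg] at this
    ext i k
    have := congrFun (congrFun h0 i) k
    simp only [Matrix.sum_apply, Matrix.smul_apply, smul_eq_mul, Matrix.zero_apply] at this ⊢
    simp only [hA, Matrix.map_apply]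
    rw [← map_zero (Polynomial.C : ℚ →+* ℚ[X]), ← this, map_sum]
    simp [mul_comm]
  -- rewrite the Q-sum with s
  have hQ : (∑ j ∈ Finset.range n,
      (∑ k ∈ Finset.Icc (j+1) n, Polynomial.C (b k) * Polynomial.X ^ (k-j-1)) • A j)
      = ∑ j ∈ Finset.range n, s (j+1) • A j := by
    refine Finset.sum_congr rfl fun j _ => ?_
    simp [hs, Nat.sub_sub]
  have hcm : charmatrix M = (Polynomial.X : ℚ[X]) • 1 - M.map Polynomial.C := by
    ext i j
    by_cases h : i = j
    · subst h; simp [charmatrix_apply, Matrix.one_apply]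
    · simp [charmatrix_apply, Matrix.one_apply, h, Matrix.diagonal_apply_ne _ h]
  have hXs : ∀ j < n, Polynomial.X * s (j+1) = s j - Polynomial.C (b j) := by
    intro j hj
    have hins : Finset.Icc j n = insert j (Finset.Icc (j+1) n) := by
      ext x; simp only [Finset.mem_Icc, Finset.mem_insert]; omega
    have hterm : ∀ k ∈ Finset.Icc (j+1) n,
        Polynomial.X * (Polynomial.C (b k) * Polynomial.X ^ (k-(j+1)))
          = Polynomial.C (b k) * Polynomial.X ^ (k-j) := by
      intro k hk
      rw [Finset.mem_Icc] at hk
      rw [show k - j = (k - (j+1)) + 1 by omega, pow_succ]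
      ring
    rw [hs]
    simp only [Finset.mul_sum]
    rw [Finset.sum_congr rfl hterm, hins, Finset.sum_insert (by simp),
      Nat.sub_self, pow_zero, mul_one, add_sub_cancel_left]
  have hsn : s n = Polynomial.C (b n) := by
    rw [hs]; simp [Finset.Icc_self]
  have hs0 : s 0 = M.charpoly := by
    have h00 : Finset.Icc 0 n = Finset.range (n+1) := by
      ext x; simp [Nat.lt_succ_iff]
    simp only [hs, h00, Nat.sub_zero]
    conv_rhs => rw [M.charpoly.as_sum_range_C_mul_X_pow]
    rw [hdeg]
  rw [hQ, hcm, sub_mul, smul_mul_assoc, one_mul, Finset.smul_sum, Finset.mul_sum]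
  have h1 : ∀ j ∈ Finset.range n,
      (Polynomial.X : ℚ[X]) • (s (j+1) • A j) = (s j - Polynomial.C (b j)) • A j := by
    intro j hj
    rw [smul_smul, ← smul_eq_mul, smul_eq_mul, hXs j (Finset.mem_range.mp hj)]
  have h2 : ∀ j ∈ Finset.range n,
      M.map Polynomial.C * (s (j+1) • A j) = s (j+1) • A (j+1) := by
    intro j _
    rw [Matrix.mul_smul, hA]
    simp only
    rw [← Matrix.map_mul, ← pow_succ']
  rw [Finset.sum_congr rfl h1, Finset.sum_congr rfl h2]
  have h3 : ∑ j ∈ Finset.range n, (s j - Polynomial.C (b j)) • A j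
      = ∑ j ∈ Finset.range n, s j • A j - ∑ j ∈ Finset.range n, Polynomial.C (b j) • A j := by
    rw [← Finset.sum_sub_distrib]
    exact Finset.sum_congr rfl fun j _ => sub_smul _ _ _
  have h4 : ∑ j ∈ Finset.range n, s (j+1) • A (j+1)
      = ∑ j ∈ Finset.range (n+1), s j • A j - s 0 • A 0 := by
    rw [Finset.sum_range_succ' (fun j => s j • A j)]
    abel
  have h5 : ∑ j ∈ Finset.range n, s j • A j
      = ∑ j ∈ Finset.range (n+1), s j • A j - s n • A n := by
    rw [Finset.sum_range_succ]; abel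
  rw [h3, h4, h5]
  have h6 : s 0 • A 0 = M.charpoly • 1 := by
    rw [hs0, hA]; simp
  have h7 : s n • A n + ∑ j ∈ Finset.range n, Polynomial.C (b j) • A j = 0 := by
    rw [hsn, add_comm, ← Finset.sum_range_succ (fun j => Polynomial.C (b j) • A j), hCH]
  calc (∑ j ∈ Finset.range (n+1), s j • A j - s n • A n
        - ∑ j ∈ Finset.range n, Polynomial.C (b j) • A j)
      - (∑ j ∈ Finset.range (n+1), s j • A j - s 0 • A 0)
      = s 0 • A 0 - (s n • A n + ∑ j ∈ Finset.range n, Polynomial.C (b j) • A j) := by abel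
    _ = M.charpoly • 1 := by rw [h7, h6, sub_zero]

set_option synthInstance.maxHeartbeats 1000000 in
set_option maxHeartbeats 3000000 in
/-- Happel's formula for the Coxeter polynomial of a one-point extension: if `C_B` is an
invertible `n × n` matrix over `ℚ`, `m` a row vector, `φ_B = −C_B⁻ᵀ·C_B`,
`⟨x, y⟩ = x·C_B⁻ᵀ·yᵀ`, and `φ_A = [[⟨m, m⟩ − 1, −m·φ_B], [−C_B⁻ᵀ·mᵀ, φ_B]]` (the Coxeter
matrix of the one-point extension), then writing `λ_i^A`, `λ_i^B` for the coefficients of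
the characteristic polynomials `χ_A = det(x·I − φ_A)`, `χ_B = det(x·I − φ_B)` (with
`λ_j^B = 0` for `j > n`, as is automatic for `Polynomial.coeff`), for all `0 ≤ ℓ ≤ n`:
`λ_{n+1−ℓ}^A = λ_{n−ℓ}^B − (⟨m,m⟩ − 1)·λ_{n−(ℓ−1)}^B − Σ_{i=1}^{ℓ−1} λ_{n−ℓ+i+1}^B·⟨m·φ_B^i, m⟩`.
(Here `n − (ℓ − 1)` is rendered as `n − ℓ + 1` to avoid truncated subtraction.) -/
theorem coxeterPolynomial_onePointExtension {n : ℕ} (CB : Matrix (Fin n) (Fin n) ℚ)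
    (hCB : IsUnit CB.det) (m : Fin n → ℚ)
    (φB : Matrix (Fin n) (Fin n) ℚ) (hφB : φB = -(CBᵀ⁻¹ * CB))
    (bil : (Fin n → ℚ) → (Fin n → ℚ) → ℚ)
    (hbil : ∀ x y, bil x y = x ⬝ᵥ (CBᵀ⁻¹ *ᵥ y))
    (φA : Matrix (Fin 1 ⊕ Fin n) (Fin 1 ⊕ Fin n) ℚ)
    (hφA : φA = Matrix.fromBlocks
        (Matrix.of fun _ _ => bil m m - 1)
        (Matrix.of fun _ j => -(m ᵥ* φB) j)
        (Matrix.of fun i _ => -(CBᵀ⁻¹ *ᵥ m) i)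
        φB)
    (ℓ : ℕ) (hℓ : ℓ ≤ n) :
    (Matrix.charpoly φA).coeff (n + 1 - ℓ) =
      (Matrix.charpoly φB).coeff (n - ℓ) -
        (bil m m - 1) * (Matrix.charpoly φB).coeff (n - ℓ + 1) -
        ∑ i ∈ Finset.Icc 1 (ℓ - 1),
          (Matrix.charpoly φB).coeff (n - ℓ + i + 1) * bil (m ᵥ* φB ^ i) m := by
  set b : ℕ → ℚ := fun k => φB.charpoly.coeff k with hbdef
  set a : ℚ := bil m m - 1 with ha
  set TR : Matrix (Fin 1) (Fin n) ℚ := Matrix.of fun _ j => (m ᵥ* φB) j with hTR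
  set BL : Matrix (Fin n) (Fin 1) ℚ := Matrix.of fun i _ => (CBᵀ⁻¹ *ᵥ m) i with hBL
  set Q : Matrix (Fin n) (Fin n) ℚ[X] := ∑ j ∈ Finset.range n,
      (∑ k ∈ Finset.Icc (j+1) n, Polynomial.C (b k) * Polynomial.X ^ (k-j-1)) •
        (φB ^ j).map Polynomial.C with hQdef
  set e : ℚ[X] := ((TR.map Polynomial.C) * Q * (BL.map Polynomial.C)) 0 0 with he
  -- block decomposition of the characteristic matrix of φA
  have hcmA : charmatrix φA = Matrix.fromBlocks
      (Matrix.of fun _ _ => (Polynomial.X : ℚ[X]) - Polynomial.C a)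
      (TR.map Polynomial.C) (BL.map Polynomial.C) (charmatrix φB) := by
    ext i j
    cases i with
    | inl i => cases j with
      | inl j =>
        have : i = j := Subsingleton.elim i j
        subst this
        simp [hφA, charmatrix_apply, Matrix.diagonal_apply, ha]
      | inr j => simp [hφA, hTR, charmatrix_apply, Matrix.diagonal_apply]
    | inr i => cases j with
      | inl j => simp [hφA, hBL, charmatrix_apply, Matrix.diagonal_apply]
      | inr j =>
        by_cases h : i = j
        · subst h; simp [hφA, charmatrix_apply, Matrix.diagonal_apply]
        · simp [hφA, charmatrix_apply, Matrix.diagonal_apply, h]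
  -- pass to the field of rational functions
  set f : ℚ[X] →+* RatFunc ℚ := algebraMap ℚ[X] (RatFunc ℚ) with hf
  have hinj : Function.Injective f := RatFunc.algebraMap_injective ℚ
  have hdetD : ((charmatrix φB).map ⇑f).det = f φB.charpoly := (RingHom.map_det f _).symm
  have hu : IsUnit ((charmatrix φB).map ⇑f).det := by
    rw [hdetD, isUnit_iff_ne_zero]
    exact (map_ne_zero_iff f hinj).mpr (φB.charpoly_monic.ne_zero)
  haveI : Invertible ((charmatrix φB).map ⇑f) := Matrix.invertibleOfIsUnitDet _ hu
  have hQF : (charmatrix φB).map ⇑f * Q.map f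
      = f φB.charpoly • (1 : Matrix (Fin n) (Fin n) (RatFunc ℚ)) := by
    have h := congrArg (fun N : Matrix (Fin n) (Fin n) ℚ[X] => N.map f) (charmatrix_mul_Q φB)
    simp only [Matrix.map_mul] at h
    simp only [hQdef, hbdef]
    rw [h]
    ext i j
    by_cases hij : i = j <;>
      simp [Matrix.map_apply, Matrix.smul_apply, Matrix.one_apply, hij]
  have hIQ : f φB.charpoly • (⅟((charmatrix φB).map ⇑f) : Matrix (Fin n) (Fin n) (RatFunc ℚ))
      = Q.map f := by
    have h := congrArg
      (fun N => (⅟((charmatrix φB).map ⇑f) : Matrix (Fin n) (Fin n) (RatFunc ℚ)) * N) hQF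
    simp only [← Matrix.mul_assoc, invOf_mul_self, Matrix.one_mul, Matrix.mul_smul,
      Matrix.mul_one] at h
    exact h.symm
  -- Happel's polynomial identity
  have hpoly : φA.charpoly = (Polynomial.X - Polynomial.C a) * φB.charpoly - e := by
    apply hinj
    have h1 : f φA.charpoly = ((charmatrix φA).map f).det := RingHom.map_det f _
    rw [h1, hcmA, Matrix.fromBlocks_map, Matrix.det_fromBlocks₂₂, Matrix.det_fin_one, hdetD]
    have h3 : (((Matrix.of fun _ _ => (Polynomial.X : ℚ[X]) - Polynomial.C a :
          Matrix (Fin 1) (Fin 1) ℚ[X])).map f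
        - (TR.map Polynomial.C).map f * ⅟((charmatrix φB).map ⇑f) * (BL.map Polynomial.C).map f)
          0 0
        = f (Polynomial.X - Polynomial.C a)
          - ((TR.map Polynomial.C).map f * ⅟((charmatrix φB).map ⇑f)
              * (BL.map Polynomial.C).map f) 0 0 := by
      simp [Matrix.sub_apply, Matrix.map_apply, Matrix.of_apply]
    rw [h3, mul_sub]
    have h4 : f φB.charpoly *
        ((TR.map Polynomial.C).map f * ⅟((charmatrix φB).map ⇑f)
          * (BL.map Polynomial.C).map f) 0 0 = f e := by
      have h5 : f φB.charpoly • ((TR.map Polynomial.C).map f * ⅟((charmatrix φB).map ⇑f)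
            * (BL.map Polynomial.C).map f)
          = (TR.map Polynomial.C).map f * (Q.map f) * (BL.map Polynomial.C).map f := by
        rw [← hIQ, Matrix.mul_smul, Matrix.smul_mul]
      have := congrFun (congrFun h5 0) 0
      rw [Matrix.smul_apply, smul_eq_mul] at this
      rw [this, he]
      have hmm : ((TR.map Polynomial.C * Q * BL.map Polynomial.C).map ⇑f)
          = (TR.map Polynomial.C).map ⇑f * Q.map ⇑f * (BL.map Polynomial.C).map ⇑f := by
        rw [_root_.Matrix.map_mul, _root_.Matrix.map_mul]
      rw [← hmm, Matrix.map_apply]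
    rw [h4, ← _root_.map_mul, ← _root_.map_sub]
    exact congrArg f (by ring)
  -- explicit form of e
  have heform : e = ∑ j ∈ Finset.range n,
      (∑ k ∈ Finset.Icc (j+1) n, Polynomial.C (b k) * Polynomial.X ^ (k-j-1)) *
        Polynomial.C (bil (m ᵥ* φB ^ (j+1)) m) := by
    rw [he, hQdef, Matrix.mul_sum, Matrix.sum_mul]
    rw [Matrix.sum_apply]
    refine Finset.sum_congr rfl fun j _ => ?_
    rw [Matrix.mul_smul, Matrix.smul_mul, Matrix.smul_apply, smul_eq_mul]
    congr 1
    have h6 : TR.map Polynomial.C * (φB ^ j).map Polynomial.C * BL.map Polynomial.C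
        = (TR * φB ^ j * BL).map Polynomial.C := by
      rw [Matrix.map_mul, Matrix.map_mul]
    rw [h6, Matrix.map_apply]
    congr 1
    rw [hbil, pow_succ', ← Matrix.vecMul_vecMul]
    simp [hTR, hBL, Matrix.mul_apply, Matrix.vecMul, dotProduct, Finset.sum_mul]
  -- coefficient extraction
  rw [show n + 1 - ℓ = (n - ℓ) + 1 by omega]
  set t := n - ℓ with ht
  rw [hpoly, Polynomial.coeff_sub, sub_mul, Polynomial.coeff_sub, Polynomial.coeff_X_mul,
    Polynomial.coeff_C_mul]
  rw [heform, Polynomial.finset_sum_coeff]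
  have hco : ∀ j ∈ Finset.range n,
      ((∑ k ∈ Finset.Icc (j+1) n, Polynomial.C (b k) * Polynomial.X ^ (k-j-1)) *
        Polynomial.C (bil (m ᵥ* φB ^ (j+1)) m)).coeff (t+1)
      = (if j + 2 ≤ ℓ then b (t+j+2) else 0) * bil (m ᵥ* φB ^ (j+1)) m := by
    intro j hj
    rw [Polynomial.coeff_mul_C, Polynomial.finset_sum_coeff]
    congr 1
    by_cases hc : j + 2 ≤ ℓ
    · rw [if_pos hc]
      rw [Finset.sum_eq_single (t+j+2)]
      · rw [Polynomial.coeff_C_mul, Polynomial.coeff_X_pow,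
          if_pos (by omega), mul_one]
      · intro k hk hne
        rw [Finset.mem_Icc] at hk
        rw [Polynomial.coeff_C_mul, Polynomial.coeff_X_pow, if_neg (by omega), mul_zero]
      · intro habs
        exact absurd (Finset.mem_Icc.mpr ⟨by omega, by omega⟩) habs
    · rw [if_neg hc]
      refine Finset.sum_eq_zero fun k hk => ?_
      rw [Finset.mem_Icc] at hk
      rw [Polynomial.coeff_C_mul, Polynomial.coeff_X_pow, if_neg (by omega), mul_zero]
  rw [Finset.sum_congr rfl hco]
  have hsum : ∑ j ∈ Finset.range n,
      (if j + 2 ≤ ℓ then b (t+j+2) else 0) * bil (m ᵥ* φB ^ (j+1)) m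
      = ∑ i ∈ Finset.Icc 1 (ℓ-1), b (t+i+1) * bil (m ᵥ* φB ^ i) m := by
    rw [Finset.sum_congr rfl (g := fun j => if j + 2 ≤ ℓ then
        b (t+j+2) * bil (m ᵥ* φB ^ (j+1)) m else 0)
      (fun j _ => by by_cases hc : j + 2 ≤ ℓ <;> simp [hc])]
    rw [← Finset.sum_filter]
    refine Finset.sum_nbij' (fun j => j + 1) (fun i => i - 1) ?_ ?_ ?_ ?_ ?_
    · intro j hj
      simp only [Finset.mem_filter, Finset.mem_range] at hj
      simp only [Finset.mem_Icc]
      omega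
    · intro i hi
      simp only [Finset.mem_Icc] at hi
      simp only [Finset.mem_filter, Finset.mem_range]
      omega
    · intro j hj
      omega
    · intro i hi
      simp only [Finset.mem_Icc] at hi
      omega
    · intro j hj
      show b (t+j+2) * bil (m ᵥ* φB ^ (j+1)) m
        = b (t + (j+1) + 1) * bil (m ᵥ* φB ^ (j+1)) m
      rw [show t + (j+1) + 1 = t + j + 2 by omega]
  rw [hsum]
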